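/- A linear functional φ on an Archimedean vector lattice X is order bounded if and only if its kernel is uniformly closed. -/

import Mathlib

/-- Relative uniform convergence closedness: `A` is uniformly closed if it contains the
limit of every sequence in `A` that converges relatively uniformly (with regulator `e`). -/
def RUClosed {X : Type*} [AddCommGroup X] [Lattice X] [Module ℝ X] (A : Set X) : Prop :=
  ∀ (x : X) (a : ℕ → X) (e : X), 0 ≤ e → (∀ n, a n ∈ A) →
    (∀ ε : ℝ, 0 < ε → ∃ N, ∀ n ≥ N, |a n - x| ≤ ε • e) → x ∈ A

/-- A linear functional is order bounded if it is bounded on every order interval. -/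
def OrderBoundedFunc {X : Type*} [AddCommGroup X] [Lattice X] [Module ℝ X]
    (φ : X →ₗ[ℝ] ℝ) : Prop :=
  ∀ a b : X, ∃ M : ℝ, ∀ x : X, a ≤ x → x ≤ b → |φ x| ≤ M

/-- A submodule is a (vector) sublattice if it is closed under finite suprema. -/
def IsVectorSublattice {X : Type*} [AddCommGroup X] [Lattice X] [Module ℝ X]
    (Y : Submodule ℝ X) : Prop :=
  ∀ x ∈ Y, ∀ y ∈ Y, x ⊔ y ∈ Y

/-- A submodule is an order ideal if it is solid. -/
def IsOrderIdeal {X : Type*} [AddCommGroup X] [Lattice X] [Module ℝ X]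
    (J : Submodule ℝ X) : Prop :=
  ∀ x y : X, |x| ≤ |y| → y ∈ J → x ∈ J

/-- The Archimedean property for a vector lattice. -/
def ArchimedeanVL (X : Type*) [AddCommGroup X] [Lattice X] [Module ℝ X] : Prop :=
  ∀ x y : X, 0 ≤ x → (∀ n : ℕ, n • x ≤ y) → x = 0

section aux
variable {X : Type*} [AddCommGroup X] [Lattice X]
    [CovariantClass X X (· + ·) (· ≤ ·)] [Module ℝ X] [PosSMulMono ℝ X]

lemma aux_smul_le_smul {r s : ℝ} {w e : X} (hrs : r ≤ s) (h0w : 0 ≤ w) (hwe : w ≤ e)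
    (hs : 0 ≤ s) : r • w ≤ s • e := by
  have h1 : r • w ≤ s • w := by
    have : 0 ≤ (s - r) • w := smul_nonneg (by linarith) h0w
    have := add_le_add_left this (r • w)
    simpa [sub_smul, add_sub_cancel] using this
  exact h1.trans (smul_le_smul_of_nonneg_left hwe hs)
end aux

theorem stmt10 {X : Type*} [AddCommGroup X] [Lattice X]
    [CovariantClass X X (· + ·) (· ≤ ·)] [Module ℝ X] [PosSMulMono ℝ X] (hArch : ArchimedeanVL X) (φ : X →ₗ[ℝ] ℝ) :
    OrderBoundedFunc φ ↔ RUClosed (LinearMap.ker φ : Set X) := by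
  constructor
  · -- order bounded → kernel RU closed
    intro hob x a e he ha hconv
    obtain ⟨M, hM⟩ := hob (-e) e
    have hM0 : 0 ≤ M := le_trans (by simp) (hM 0 (by simpa using he) he)
    -- show |φ x| ≤ ε * M for all ε > 0
    have key : ∀ ε : ℝ, 0 < ε → |φ x| ≤ ε * M := by
      intro ε hε
      obtain ⟨N, hN⟩ := hconv ε hε
      have hdiff := hN N le_rfl
      set z : X := ε⁻¹ • (a N - x) with hz
      have hinv0 : (0:ℝ) ≤ ε⁻¹ := le_of_lt (inv_pos.mpr hε)
      have hee : ε⁻¹ • (ε • e) = e := by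
        rw [smul_smul, inv_mul_cancel₀ hε.ne', one_smul]
      have h2 : z ≤ e := by
        rw [hz, ← hee]
        exact smul_le_smul_of_nonneg_left ((le_abs_self _).trans hdiff) hinv0
      have h1 : -e ≤ z := by
        rw [neg_le, hz, ← smul_neg, ← hee]
        exact smul_le_smul_of_nonneg_left ((neg_le_abs _).trans hdiff) hinv0
      have hφz : |φ z| ≤ M := hM z h1 h2
      have hφzval : φ z = ε⁻¹ * (- φ x) := by
        have hker : φ (a N) = 0 := by
          have := ha N
          simpa only [SetLike.mem_coe, LinearMap.mem_ker] using this
        simp [hz, map_smul, map_sub, hker]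
      rw [hφzval] at hφz
      rw [abs_mul, abs_of_pos (inv_pos.mpr hε), abs_neg] at hφz
      calc |φ x| = ε * (ε⁻¹ * |φ x|) := by field_simp
        _ ≤ ε * M := by nlinarith [abs_nonneg (φ x)]
    have hx0 : φ x = 0 := by
      by_contra hne
      have hpos : 0 < |φ x| := abs_pos.mpr hne
      rcases le_or_gt M 0 with hMle | hMpos
      · have := key 1 one_pos
        nlinarith
      · have hk := key (|φ x| / (2 * M)) (by positivity)
        have heq : |φ x| / (2 * M) * M = |φ x| / 2 := by field_simp
        rw [heq] at hk
        linarith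
    exact LinearMap.mem_ker.mpr hx0
  · -- kernel RU closed → order bounded
    intro hcl
    by_contra hnb
    unfold OrderBoundedFunc at hnb
    push_neg at hnb
    obtain ⟨a, b, hab⟩ := hnb
    -- choose u n with a ≤ u n ≤ b and |φ (u n)| > (n+1) + |φ a|
    have hu : ∀ n : ℕ, ∃ u : X, a ≤ u ∧ u ≤ b ∧ ((n : ℝ) + 1) + |φ a| < |φ u| := by
      intro n
      obtain ⟨u, h1, h2, h3⟩ := hab (((n : ℝ) + 1) + |φ a|)
      exact ⟨u, h1, h2, h3⟩
    choose u hu1 hu2 hu3 using hu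
    set e : X := b - a with he
    have he0 : 0 ≤ e := sub_nonneg.mpr ((hu1 0).trans (hu2 0))
    set w : ℕ → X := fun n => u n - a with hw
    have hw0 : ∀ n, 0 ≤ w n := fun n => sub_nonneg.mpr (hu1 n)
    have hwe : ∀ n, w n ≤ e := fun n => sub_le_sub_right (hu2 n) a
    set t : ℕ → ℝ := fun n => φ (w n) with ht
    have htlarge : ∀ n : ℕ, (n : ℝ) + 1 < |t n| := by
      intro n
      have : |φ (u n)| - |φ a| ≤ |t n| := by
        have : t n = φ (u n) - φ a := by simp [ht, hw]
        rw [this]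
        exact abs_sub_abs_le_abs_sub _ _
      linarith [hu3 n]
    have htpos : ∀ n, 0 < |t n| := fun n => lt_trans (by positivity) (htlarge n)
    have htne : ∀ n, t n ≠ 0 := fun n => abs_pos.mp (htpos n)
    set c : ℕ → X := fun n => (t n)⁻¹ • w n with hc
    have hφc : ∀ n, φ (c n) = 1 := by
      intro n
      simp [hc, map_smul, ← ht, inv_mul_cancel₀ (htne n)]
      exact inv_mul_cancel₀ (htne n)
    -- |c n| ≤ ((n:ℝ)+1)⁻¹ • e
    have hcbound : ∀ n, |c n| ≤ ((n : ℝ) + 1)⁻¹ • e := by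
      intro n
      have hinv : |(t n)⁻¹| ≤ ((n : ℝ) + 1)⁻¹ := by
        rw [abs_inv]
        exact inv_anti₀ (by positivity) (le_of_lt (htlarge n))
      have hinvpos : (0:ℝ) ≤ ((n : ℝ) + 1)⁻¹ := by positivity
      rw [abs_le']
      constructor
      · exact aux_smul_le_smul ((le_abs_self _).trans hinv) (hw0 n) (hwe n) hinvpos
      · have : -(c n) = (-(t n)⁻¹) • w n := by simp [hc]
        rw [this]
        exact aux_smul_le_smul ((neg_le_abs _).trans hinv) (hw0 n) (hwe n) hinvpos
    -- the sequence c n - c 0 lies in ker φ and converges r.u. to -(c 0)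
    have hmem : - c 0 ∈ (LinearMap.ker φ : Set X) := by
      apply hcl (- c 0) (fun n => c n - c 0) e he0
      · intro n
        simp only [SetLike.mem_coe, LinearMap.mem_ker, map_sub, hφc, sub_self]
      · intro ε hε
        obtain ⟨N, hN⟩ := exists_nat_gt ε⁻¹
        refine ⟨N, fun n hn => ?_⟩
        have h1 : (c n - c 0) - (- c 0) = c n := by abel
        rw [h1]
        refine (hcbound n).trans ?_
        have hle : ((n : ℝ) + 1)⁻¹ ≤ ε := by
          rw [inv_le_comm₀ (by positivity) hε]
          calc ε⁻¹ ≤ (N : ℝ) := le_of_lt hN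
            _ ≤ (n : ℝ) + 1 := by exact_mod_cast Nat.le_succ_of_le hn
        calc ((n : ℝ) + 1)⁻¹ • e ≤ ε • e := by
              have : 0 ≤ (ε - ((n : ℝ) + 1)⁻¹) • e := smul_nonneg (by linarith) he0
              have h2 := add_le_add_left this (((n : ℝ) + 1)⁻¹ • e)
              simpa [sub_smul] using h2
          _ = ε • e := rfl
    rw [SetLike.mem_coe, LinearMap.mem_ker, map_neg, hφc] at hmem
    norm_num at hmem
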